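/- Let β ≥ 0 and let θ : ℕ → ℝ satisfy θ_i ≥ 0 for all i and Σ_i θ_i² < ∞, and assume that β > 0 or Σ_i θ_i = ∞ (i.e. θ is not summable). Then the function Ψ(t) = (β/2)t² + Σ_i (e^{−θ_i t} − 1 + θ_i t) is continuous on [0, ∞), strictly increasing on [0, ∞), and Ψ(t) → ∞ as t → ∞. -/

import Mathlib

open Real Set Filter

lemma auxg_nonneg (x : ℝ) : 0 ≤ Real.exp (-x) - 1 + x := by
  have := Real.add_one_le_exp (-x); linarith

lemma auxg_hasDeriv (x : ℝ) :
    HasDerivAt (fun x : ℝ => Real.exp (-x) - 1 + x) (1 - Real.exp (-x)) x := by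
  have h1 : HasDerivAt (fun x : ℝ => Real.exp (-x)) (-Real.exp (-x)) x := by
    simpa [Function.comp_def] using (Real.hasDerivAt_exp (-x)).comp x (hasDerivAt_neg x)
  simpa [sub_eq_add_neg, add_comm, Pi.add_def] using (h1.sub_const 1).add (hasDerivAt_id x)

lemma auxg_strictMono : StrictMonoOn (fun x : ℝ => Real.exp (-x) - 1 + x) (Set.Ici 0) := by
  apply strictMonoOn_of_deriv_pos (convex_Ici 0)
  · exact (Continuous.continuousOn (by continuity))
  · intro x hx
    rw [interior_Ici] at hx
    rw [(auxg_hasDeriv x).deriv]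
    have : Real.exp (-x) < 1 := Real.exp_lt_one_iff.mpr (by linarith [hx.out])
    linarith

lemma auxg_le_sq (x : ℝ) (hx : 0 ≤ x) : Real.exp (-x) - 1 + x ≤ x ^ 2 / 2 := by
  have hmono : MonotoneOn (fun x : ℝ => x ^ 2 / 2 - (Real.exp (-x) - 1 + x)) (Set.Ici 0) := by
    apply monotoneOn_of_deriv_nonneg (convex_Ici 0)
    · exact Continuous.continuousOn (by continuity)
    · intro x hx
      exact (((hasDerivAt_pow 2 x).div_const 2).sub (auxg_hasDeriv x)).differentiableAt.differentiableWithinAt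
    · intro x hx
      rw [show (fun x : ℝ => x ^ 2 / 2 - (Real.exp (-x) - 1 + x)) = ((fun x : ℝ => x ^ 2 / 2) - fun x => Real.exp (-x) - 1 + x) from rfl, (((hasDerivAt_pow 2 x).div_const 2).sub (auxg_hasDeriv x)).deriv]
      nlinarith [auxg_nonneg x]
  have := hmono (Set.self_mem_Ici) hx hx
  simp at this
  linarith

lemma aux_summable (θ : ℕ → ℝ) (hθ : ∀ i, 0 ≤ θ i) (hθ2 : Summable fun i => (θ i) ^ 2)
    (t : ℝ) (ht : 0 ≤ t) :
    Summable (fun i => Real.exp (-(θ i * t)) - 1 + θ i * t) := by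
  apply Summable.of_nonneg_of_le (fun i => auxg_nonneg _)
    (fun i => ?_) (hθ2.mul_right (t ^ 2 / 2))
  have h1 := auxg_le_sq (θ i * t) (mul_nonneg (hθ i) ht)
  calc Real.exp (-(θ i * t)) - 1 + θ i * t ≤ (θ i * t) ^ 2 / 2 := h1
    _ = θ i ^ 2 * (t ^ 2 / 2) := by ring

theorem psi_continuous_strictMono_tendsto
    (β : ℝ) (hβ : 0 ≤ β) (θ : ℕ → ℝ) (hθ : ∀ i, 0 ≤ θ i)
    (hθ2 : Summable fun i => (θ i) ^ 2)
    (hass : 0 < β ∨ ¬ Summable θ) :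
    ContinuousOn
        (fun t : ℝ => β / 2 * t ^ 2 + ∑' i, (Real.exp (-(θ i * t)) - 1 + θ i * t))
        (Set.Ici 0) ∧
    StrictMonoOn
        (fun t : ℝ => β / 2 * t ^ 2 + ∑' i, (Real.exp (-(θ i * t)) - 1 + θ i * t))
        (Set.Ici 0) ∧
    Filter.Tendsto
        (fun t : ℝ => β / 2 * t ^ 2 + ∑' i, (Real.exp (-(θ i * t)) - 1 + θ i * t))
        Filter.atTop Filter.atTop := by
  set g : ℕ → ℝ → ℝ := fun i t => Real.exp (-(θ i * t)) - 1 + θ i * t with hg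
  -- continuity of the tsum on each Icc 0 T
  have hcontIcc : ∀ T : ℝ, 0 ≤ T →
      ContinuousOn (fun t : ℝ => ∑' i, g i t) (Set.Icc 0 T) := by
    intro T hT
    have hu : Summable (fun i => θ i ^ 2 * (T ^ 2 / 2)) := hθ2.mul_right _
    have htu : TendstoUniformlyOn (fun (s : Finset ℕ) x => ∑ n ∈ s, g n x)
        (fun x => ∑' n, g n x) atTop (Set.Icc 0 T) := by
      apply tendstoUniformlyOn_tsum hu
      intro n x hx
      rw [Real.norm_of_nonneg (auxg_nonneg _)]
      have h1 := auxg_le_sq (θ n * x) (mul_nonneg (hθ n) hx.1)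
      have h2 : (θ n * x) ^ 2 ≤ (θ n * T) ^ 2 :=
        pow_le_pow_left₀ (mul_nonneg (hθ n) hx.1)
          (mul_le_mul_of_nonneg_left hx.2 (hθ n)) 2
      calc g n x ≤ (θ n * x) ^ 2 / 2 := h1
        _ ≤ (θ n * T) ^ 2 / 2 := by linarith
        _ = θ n ^ 2 * (T ^ 2 / 2) := by ring
    apply htu.continuousOn
    refine (Filter.Eventually.of_forall fun s => ?_).frequently
    exact (Continuous.continuousOn (by continuity))
  refine ⟨?_, ?_, ?_⟩
  · -- ContinuousOn
    intro x hx
    have hc : ContinuousWithinAt (fun t : ℝ => β / 2 * t ^ 2 + ∑' i, g i t)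
        (Set.Icc 0 (x + 1)) x := by
      have hpoly : ContinuousOn (fun t : ℝ => β / 2 * t ^ 2) (Set.Icc 0 (x + 1)) :=
        (continuous_const.mul (continuous_pow 2)).continuousOn
      exact (hpoly.add (hcontIcc (x + 1) (by linarith [hx.out]))) x ⟨hx.out, by linarith⟩
    apply hc.mono_of_mem_nhdsWithin
    have : Set.Ici (0:ℝ) ∩ Set.Iic (x + 1) ∈ nhdsWithin x (Set.Ici 0) :=
      inter_mem_nhdsWithin _ (Iic_mem_nhds (by linarith [hx.out]))
    simpa [Set.Ici_inter_Iic] using this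
  · -- StrictMonoOn
    intro s hs t ht hst
    have hsum_s := aux_summable θ hθ hθ2 s hs.out
    have hsum_t := aux_summable θ hθ hθ2 t ht.out
    have hle : ∀ i, g i s ≤ g i t := by
      intro i
      rcases eq_or_lt_of_le (hθ i) with h0 | h0
      · simp [hg, ← h0]
      · exact auxg_strictMono.monotoneOn (mul_nonneg (hθ i) hs.out)
          (mul_nonneg (hθ i) ht.out)
          (mul_le_mul_of_nonneg_left hst.le (hθ i))
    rcases hass with hβpos | hns
    · have h1 : β / 2 * s ^ 2 < β / 2 * t ^ 2 :=
        mul_lt_mul_of_pos_left (pow_lt_pow_left₀ hst hs.out two_ne_zero) (by positivity)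
      have h2 : (∑' i, g i s) ≤ ∑' i, g i t := Summable.tsum_le_tsum hle hsum_s hsum_t
      dsimp only
      linarith
    · obtain ⟨i₀, hi₀⟩ : ∃ i, 0 < θ i := by
        by_contra h
        push_neg at h
        exact hns (by
          have : θ = fun _ => 0 := funext fun i => le_antisymm (h i) (hθ i)
          rw [this]; exact summable_zero)
      have hlt : g i₀ s < g i₀ t :=
        auxg_strictMono (mul_nonneg (hθ i₀) hs.out) (mul_nonneg (hθ i₀) ht.out)
          ((mul_lt_mul_iff_right₀ hi₀).mpr hst)
      have h2 : (∑' i, g i s) < ∑' i, g i t := Summable.tsum_lt_tsum hle hlt hsum_s hsum_t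
      have h1 : β / 2 * s ^ 2 ≤ β / 2 * t ^ 2 :=
        mul_le_mul_of_nonneg_left (pow_le_pow_left₀ hs.out hst.le 2) (by positivity)
      dsimp only
      linarith
  · -- Tendsto atTop
    rcases hass with hβpos | hns
    · have hlow : Filter.Tendsto (fun t : ℝ => β / 2 * t ^ 2) atTop atTop :=
        (tendsto_pow_atTop (two_ne_zero)).const_mul_atTop (by positivity)
      apply tendsto_atTop_mono' _ _ hlow
      filter_upwards [eventually_ge_atTop (0:ℝ)] with t ht
      have : 0 ≤ ∑' i, g i t :=
        tsum_nonneg (fun i => auxg_nonneg _)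
      simp only [hg] at this ⊢
      linarith
    · obtain ⟨i₀, hi₀⟩ : ∃ i, 0 < θ i := by
        by_contra h
        push_neg at h
        exact hns (by
          have : θ = fun _ => 0 := funext fun i => le_antisymm (h i) (hθ i)
          rw [this]; exact summable_zero)
      have hlow : Filter.Tendsto (fun t : ℝ => θ i₀ * t - 1) atTop atTop := by
        apply tendsto_atTop_add_const_right
        exact (tendsto_id.const_mul_atTop hi₀)
      apply tendsto_atTop_mono' _ _ hlow
      filter_upwards [eventually_ge_atTop (0:ℝ)] with t ht
      have hsum := aux_summable θ hθ hθ2 t ht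
      have h1 : g i₀ t ≤ ∑' i, g i t := Summable.le_tsum hsum i₀ (fun j _ => auxg_nonneg _)
      have h2 : θ i₀ * t - 1 ≤ g i₀ t := by
        have := Real.exp_pos (-(θ i₀ * t))
        simp only [hg]
        linarith
      have h3 : 0 ≤ β / 2 * t ^ 2 := by positivity
      simp only [hg] at h1 h2 ⊢
      linarith
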